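/- Let n ≥ 2 and let f : ℝ → ℝ satisfy f(t) ≥ A·min{0,t} − K for all t ∈ ℝ, where A ≥ 0, K ≥ 0. Let u ∈ C²(B_r) satisfy −Δu = f(u) in B_r ⊂ ℝⁿ. Then there is a constant C(n), depending only on n, such that at every point x ∈ B_r with Du(x) ≠ 0, |D²u(x)| ≤ C(n)·(|D²u(x)|² − |w(x)|²)^{1/2} − Δu(x) + 2(A|u(x)| + K), where w(x) := D²u(x)·Du(x)/|Du(x)| (the gradient of |Du| at x) and |D²u| denotes the Frobenius norm of the Hessian. -/

import Mathlib

open MeasureTheory Metric Filter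
open scoped RealInnerProductSpace Topology

noncomputable section

abbrev En (n : ℕ) := EuclideanSpace ℝ (Fin n)

/-- `f'₋(t) = liminf_{h→0} (f(t+h)-f(t))/h`. -/
def fminus (f : ℝ → ℝ) (t : ℝ) : ℝ :=
  Filter.liminf (fun h => (f (t + h) - f t) / h) (𝓝[≠] (0 : ℝ))

/-- The Laplacian of `u`, i.e. the trace of its Hessian. -/
def lapl {n : ℕ} (u : En n → ℝ) (x : En n) : ℝ :=
  ∑ i, fderiv ℝ (fun y => fderiv ℝ u y (EuclideanSpace.single i 1)) x
      (EuclideanSpace.single i 1)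


/-- The Frobenius norm of the Hessian of `u` at `x`. -/
def hessNorm {n : ℕ} (u : En n → ℝ) (x : En n) : ℝ :=
  Real.sqrt (∑ i, ∑ j,
    (fderiv ℝ (fun y => fderiv ℝ u y (EuclideanSpace.single j 1)) x
      (EuclideanSpace.single i 1)) ^ 2)

/-- The Hessian of `u` at `x` applied to the vector `v`, as a vector in `ℝⁿ`. -/
def hessApply {n : ℕ} (u : En n → ℝ) (x v : En n) : En n :=
  (EuclideanSpace.equiv (Fin n) ℝ).symm
    (fun i => fderiv ℝ (fun y => fderiv ℝ u y v) x (EuclideanSpace.single i 1))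

open Finset

private lemma row_sq {n : ℕ} (h v w : Fin n → ℝ) (α β : ℝ) :
    ∑ j, (h j + α * v j + β * w j)^2
      = (∑ j, h j^2) + α^2 * (∑ j, v j^2) + β^2 * (∑ j, w j^2)
        + 2*α*(∑ j, h j * v j) + 2*β*(∑ j, h j * w j) + 2*(α*β)*(∑ j, v j * w j) := by
  simp only [Finset.mul_sum, ← Finset.sum_add_distrib]
  apply Finset.sum_congr rfl
  intros; ring

private lemma sqrt_add_le' {a b : ℝ} (ha : 0 ≤ a) (hb : 0 ≤ b) :
    Real.sqrt (a + b) ≤ Real.sqrt a + Real.sqrt b := by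
  have h1 := Real.sq_sqrt ha
  have h2 := Real.sq_sqrt hb
  have h3 := Real.sqrt_nonneg a
  have h4 := Real.sqrt_nonneg b
  have h : a + b ≤ (Real.sqrt a + Real.sqrt b)^2 := by nlinarith
  calc Real.sqrt (a + b) ≤ Real.sqrt ((Real.sqrt a + Real.sqrt b)^2) := Real.sqrt_le_sqrt h
    _ = Real.sqrt a + Real.sqrt b := Real.sqrt_sq (by positivity)

set_option maxHeartbeats 1000000 in
private lemma key_alg (n : ℕ) (hn : 1 ≤ n) (H : Fin n → Fin n → ℝ)
    (hsymm : ∀ i j, H i j = H j i)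
    (ν a t : Fin n → ℝ) (S T lam D M : ℝ)
    (hν : ∑ i, ν i ^ 2 = 1)
    (ha : ∀ i, a i = ∑ j, H i j * ν j)
    (hS : S = ∑ i, ∑ j, H i j ^ 2)
    (hT : T = ∑ i, a i ^ 2)
    (hlam : lam = ∑ i, ν i * a i)
    (htf : ∀ i, t i = a i - lam * ν i)
    (hD : D = ∑ i, H i i)
    (hM : 0 ≤ M) (hDM : D ≤ M) :
    Real.sqrt S ≤ ((n : ℝ) + 2) * Real.sqrt (S - T) - D + 2 * M := by
  have haf : ∀ i, a i = t i + lam * ν i := fun i => by rw [htf i]; ring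
  -- ∑ ν t = 0
  have htν : ∑ i, ν i * t i = 0 := by
    have e1 : ∀ i ∈ univ, ν i * t i = ν i * a i - lam * ν i ^ 2 := by
      intro i _; rw [htf i]; ring
    rw [Finset.sum_congr rfl e1, Finset.sum_sub_distrib, ← hlam, ← Finset.mul_sum, hν, mul_one,
      sub_self]
  -- ∑ t a = ∑ t²
  have hta : ∑ i, t i * a i = ∑ i, t i ^ 2 := by
    have e1 : ∀ i ∈ univ, t i * a i = t i ^ 2 + lam * (ν i * t i) := by
      intro i _; rw [haf i]; ring
    rw [Finset.sum_congr rfl e1, Finset.sum_add_distrib, ← Finset.mul_sum, htν, mul_zero, add_zero]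
  -- T = ∑ t² + lam²
  have hTt : T = (∑ i, t i ^ 2) + lam ^ 2 := by
    have e1 : ∀ i ∈ univ, a i ^ 2 = t i ^ 2 + 2 * lam * (ν i * t i) + lam ^ 2 * ν i ^ 2 := by
      intro i _; rw [haf i]; ring
    rw [hT, Finset.sum_congr rfl e1, Finset.sum_add_distrib, Finset.sum_add_distrib,
      ← Finset.mul_sum, ← Finset.mul_sum, htν, mul_zero, add_zero, hν, mul_one]
  -- ∑ᵢ νᵢ (H t)ᵢ = ∑ t²
  have hbν : ∑ i, ν i * (∑ j, H i j * t j) = ∑ i, t i ^ 2 := by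
    have e1 : ∀ i ∈ univ, ν i * (∑ j, H i j * t j) = ∑ j, ν i * (H i j * t j) := by
      intro i _; rw [Finset.mul_sum]
    rw [Finset.sum_congr rfl e1, Finset.sum_comm]
    have e2 : ∀ j ∈ univ, ∑ i, ν i * (H i j * t j) = t j * a j := by
      intro j _
      rw [ha j, Finset.mul_sum]
      apply Finset.sum_congr rfl
      intro i _; rw [hsymm j i]; ring
    rw [Finset.sum_congr rfl e2]
    exact hta
  -- Frobenius norm of B = H - a νᵀ - ν tᵀ
  have hBsq : ∑ i, ∑ j, (H i j + (-(a i)) * ν j + (-(ν i)) * t j) ^ 2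
      = S - T - ∑ i, t i ^ 2 := by
    have e1 : ∀ i ∈ univ, ∑ j, (H i j + (-(a i)) * ν j + (-(ν i)) * t j) ^ 2
        = ((∑ j, H i j ^ 2) - a i ^ 2) + ((∑ j, t j ^ 2) * ν i ^ 2
            - 2 * (ν i * (∑ j, H i j * t j))) := by
      intro i _
      rw [row_sq (H i) ν t (-(a i)) (-(ν i)), hν, htν, ← ha i]
      ring
    rw [Finset.sum_congr rfl e1, Finset.sum_add_distrib, Finset.sum_sub_distrib,
      Finset.sum_sub_distrib, ← hS, ← hT]
    simp only [← Finset.mul_sum]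
    rw [hν, mul_one, hbν]
    ring
  have hBnn : 0 ≤ S - T - ∑ i, t i ^ 2 := by
    rw [← hBsq]; positivity
  have htnn : 0 ≤ ∑ i, t i ^ 2 := by positivity
  -- trace computations for Cauchy-Schwarz with P = I - ν νᵀ
  have hPB : ∑ i, ∑ j, ((if i = j then (1:ℝ) else 0) - ν i * ν j)
        * (H i j + (-(a i)) * ν j + (-(ν i)) * t j) = D - lam := by
    have e1 : ∀ i ∈ univ, ∑ j, ((if i = j then (1:ℝ) else 0) - ν i * ν j)
          * (H i j + (-(a i)) * ν j + (-(ν i)) * t j)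
        = (H i i - a i * ν i - ν i * t i)
            - ν i * ((∑ j, H i j * ν j) - a i * (∑ j, ν j ^ 2) - ν i * (∑ j, ν j * t j)) := by
      intro i _
      have e2 : ∀ j ∈ univ, ((if i = j then (1:ℝ) else 0) - ν i * ν j)
            * (H i j + (-(a i)) * ν j + (-(ν i)) * t j)
          = (if i = j then (H i j + (-(a i)) * ν j + (-(ν i)) * t j) else 0)
              - ν i * (H i j * ν j - a i * ν j ^ 2 - ν i * (ν j * t j)) := by
        intro j _
        by_cases h : i = j <;> simp [h] <;> ring
      rw [Finset.sum_congr rfl e2, Finset.sum_sub_distrib, Finset.sum_ite_eq, if_pos (mem_univ i)]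
      rw [← Finset.mul_sum, Finset.sum_sub_distrib, Finset.sum_sub_distrib, ← Finset.mul_sum,
        ← Finset.mul_sum]
      ring
    rw [Finset.sum_congr rfl e1]
    have e3 : ∀ i ∈ univ, (H i i - a i * ν i - ν i * t i)
          - ν i * ((∑ j, H i j * ν j) - a i * (∑ j, ν j ^ 2) - ν i * (∑ j, ν j * t j))
        = H i i - ν i * a i - ν i * t i := by
      intro i _
      rw [← ha i, hν, htν]
      ring
    rw [Finset.sum_congr rfl e3, Finset.sum_sub_distrib, Finset.sum_sub_distrib, ← hD, ← hlam,
      htν, sub_zero]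
  have hPsq : ∑ i, ∑ j, ((if i = j then (1:ℝ) else 0) - ν i * ν j) ^ 2 = (n : ℝ) - 1 := by
    have e1 : ∀ i ∈ univ, ∑ j, ((if i = j then (1:ℝ) else 0) - ν i * ν j) ^ 2
        = 1 - 2 * ν i ^ 2 + ν i ^ 2 * (∑ j, ν j ^ 2) := by
      intro i _
      have e2 : ∀ j ∈ univ, ((if i = j then (1:ℝ) else 0) - ν i * ν j) ^ 2
          = (if i = j then (1 - 2 * (ν i * ν j)) else 0) + ν i ^ 2 * ν j ^ 2 := by
        intro j _
        by_cases h : i = j <;> simp [h] <;> ring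
      rw [Finset.sum_congr rfl e2, Finset.sum_add_distrib, Finset.sum_ite_eq,
        if_pos (mem_univ i), ← Finset.mul_sum]
      ring
    simp only [hν, mul_one] at e1 ⊢
    have e3 : ∀ i ∈ univ, (1:ℝ) - 2 * ν i ^ 2 + ν i ^ 2 = 1 - ν i ^ 2 := by
      intro i _; ring
    rw [Finset.sum_congr rfl e1, Finset.sum_congr rfl e3, Finset.sum_sub_distrib, hν,
      Finset.sum_const, Finset.card_univ, Fintype.card_fin, nsmul_eq_mul, mul_one]
  -- Cauchy-Schwarz
  have cs := Finset.sum_mul_sq_le_sq_mul_sq (Finset.univ : Finset (Fin n × Fin n))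
      (fun p => (if p.1 = p.2 then (1:ℝ) else 0) - ν p.1 * ν p.2)
      (fun p => H p.1 p.2 + (-(a p.1)) * ν p.2 + (-(ν p.1)) * t p.2)
  simp only [Fintype.sum_prod_type] at cs
  rw [hPB, hPsq, hBsq] at cs
  -- numeric assembly
  have hn' : (1:ℝ) ≤ (n : ℝ) := by exact_mod_cast hn
  have hRnn : 0 ≤ S - T := by linarith
  have hlam2 : lam ^ 2 ≤ T := by
    have := Finset.sum_mul_sq_le_sq_mul_sq (Finset.univ : Finset (Fin n)) ν a
    rw [hν, one_mul, ← hT, ← hlam] at this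
    exact this
  have hSle : S ≤ 2 * (S - T) + lam ^ 2 := by linarith [hTt, hBnn]
  have csR : (D - lam) ^ 2 ≤ ((n:ℝ) - 1) * (S - T) := by
    have h1 : ((n:ℝ) - 1) * (S - T - ∑ i, t i ^ 2) ≤ ((n:ℝ) - 1) * (S - T) :=
      mul_le_mul_of_nonneg_left (by linarith) (by linarith)
    linarith
  have habs : |D - lam| ≤ Real.sqrt ((n:ℝ) - 1) * Real.sqrt (S - T) := by
    rw [← Real.sqrt_sq_eq_abs, ← Real.sqrt_mul (by linarith : (0:ℝ) ≤ (n:ℝ) - 1)]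
    exact Real.sqrt_le_sqrt csR
  have hlamabs : |lam| ≤ |D - lam| - D + 2 * M := by
    rcases abs_cases lam with ⟨h1, h2⟩ | ⟨h1, h2⟩ <;>
      rcases abs_cases (D - lam) with ⟨h3, h4⟩ | ⟨h3, h4⟩ <;> linarith
  have step1 : Real.sqrt S ≤ Real.sqrt 2 * Real.sqrt (S - T) + |lam| := by
    calc Real.sqrt S ≤ Real.sqrt (2 * (S - T) + lam ^ 2) := Real.sqrt_le_sqrt hSle
      _ ≤ Real.sqrt (2 * (S - T)) + Real.sqrt (lam ^ 2) :=
          sqrt_add_le' (by linarith) (sq_nonneg _)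
      _ = Real.sqrt 2 * Real.sqrt (S - T) + |lam| := by
          rw [Real.sqrt_mul (by norm_num) , Real.sqrt_sq_eq_abs]
  have hsqrt2 : Real.sqrt 2 ≤ 2 := by
    have h1 : Real.sqrt 2 ≤ Real.sqrt 4 := Real.sqrt_le_sqrt (by norm_num)
    have h2 : Real.sqrt 4 = 2 := by
      rw [show (4:ℝ) = 2 ^ 2 by norm_num, Real.sqrt_sq (by norm_num)]
    linarith
  have hsqrtn : Real.sqrt ((n:ℝ) - 1) ≤ (n : ℝ) := by
    have h0 : (n:ℝ) - 1 ≤ (n:ℝ) ^ 2 := by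
      have : (1:ℝ) * (n:ℝ) ≤ (n:ℝ) * (n:ℝ) := mul_le_mul_of_nonneg_right hn' (by linarith)
      have hsq : (n:ℝ) ^ 2 = (n:ℝ) * (n:ℝ) := sq (n:ℝ)
      linarith
    have h1 : Real.sqrt ((n:ℝ) - 1) ≤ Real.sqrt ((n:ℝ) ^ 2) := Real.sqrt_le_sqrt h0
    rwa [Real.sqrt_sq (by linarith)] at h1
  have hcoef : (Real.sqrt 2 + Real.sqrt ((n:ℝ) - 1)) * Real.sqrt (S - T)
      ≤ ((n:ℝ) + 2) * Real.sqrt (S - T) := by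
    apply mul_le_mul_of_nonneg_right _ (Real.sqrt_nonneg _)
    linarith
  have hadd : (Real.sqrt 2 + Real.sqrt ((n:ℝ) - 1)) * Real.sqrt (S - T)
      = Real.sqrt 2 * Real.sqrt (S - T) + Real.sqrt ((n:ℝ) - 1) * Real.sqrt (S - T) :=
    add_mul _ _ _
  linarith

set_option maxHeartbeats 1000000 in
/-- The pointwise Hessian inequality at points where `Du ≠ 0`. -/
theorem statement11 (n : ℕ) (hn : 2 ≤ n) :
    ∃ C : ℝ, 0 < C ∧
    ∀ A K : ℝ, 0 ≤ A → 0 ≤ K →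
    ∀ f : ℝ → ℝ, (∀ t : ℝ, A * min 0 t - K ≤ f t) →
    ∀ r : ℝ, 0 < r →
    ∀ u : En n → ℝ, ContDiffOn ℝ 2 u (ball (0 : En n) r) →
      (∀ x ∈ ball (0 : En n) r, -lapl u x = f (u x)) →
    ∀ x ∈ ball (0 : En n) r, gradient u x ≠ 0 →
      hessNorm u x ≤
        C * Real.sqrt (hessNorm u x ^ 2 -
              ‖‖gradient u x‖⁻¹ • hessApply u x (gradient u x)‖ ^ 2)
          - lapl u x + 2 * (A * |u x| + K) := by
  refine ⟨(n : ℝ) + 2, by positivity, ?_⟩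
  intro A K hA hK f hf r hr u hu hlap x hx hgx
  have hball : ball (0 : En n) r ∈ 𝓝 x := isOpen_ball.mem_nhds hx
  have hu2 : ContDiffAt ℝ 2 u x := hu.contDiffAt hball
  -- differentiability of the derivative
  have hdiff : DifferentiableAt ℝ (fderiv ℝ u) x := by
    have h1 : ContDiffOn ℝ 1 (fderiv ℝ u) (ball (0 : En n) r) :=
      hu.fderiv_of_isOpen isOpen_ball (by norm_num)
    exact (h1.contDiffAt hball).differentiableAt one_ne_zero
  -- second derivative
  have hkey : ∀ v w : En n, fderiv ℝ (fun y => fderiv ℝ u y v) x w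
      = fderiv ℝ (fderiv ℝ u) x w v := by
    intro v w
    have h := fderiv_clm_apply (c := fderiv ℝ u) (u := fun _ => v) hdiff
      (differentiableAt_const v)
    simp only [fderiv_fun_const, Pi.zero_apply, ContinuousLinearMap.comp_zero, zero_add] at h
    have h2 : (fun y => fderiv ℝ u y v) = (fun y => (fderiv ℝ u y) ((fun _ : En n => v) y)) := rfl
    rw [h2, h, ContinuousLinearMap.flip_apply]
  have hsym : ∀ v w : En n, fderiv ℝ (fderiv ℝ u) x v w = fderiv ℝ (fderiv ℝ u) x w v :=
    hu2.isSymmSndFDerivAt (by simp)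
  set e : Fin n → En n := fun i => EuclideanSpace.single i 1 with hedef
  set H : Fin n → Fin n → ℝ :=
    fun i j => fderiv ℝ (fun y => fderiv ℝ u y (e j)) x (e i) with hHdef
  have hH : ∀ i j, H i j = fderiv ℝ (fderiv ℝ u) x (e i) (e j) := fun i j => hkey (e j) (e i)
  have hsymm : ∀ i j, H i j = H j i := by
    intro i j; rw [hH i j, hH j i]; exact hsym (e i) (e j)
  set G : En n := gradient u x with hGdef
  have hGne : ‖G‖ ≠ 0 := norm_ne_zero_iff.mpr hgx
  set ν : Fin n → ℝ := fun i => ‖G‖⁻¹ * G i with hνdef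
  have hG2 : ‖G‖ ^ 2 = ∑ i, G i ^ 2 := by
    rw [EuclideanSpace.norm_eq, Real.sq_sqrt (by positivity)]
    exact Finset.sum_congr rfl fun i _ => by rw [Real.norm_eq_abs, sq_abs]
  have hν : ∑ i, ν i ^ 2 = 1 := by
    have : ∀ i ∈ univ, ν i ^ 2 = ‖G‖⁻¹ ^ 2 * G i ^ 2 := by
      intro i _; rw [hνdef]; ring
    rw [Finset.sum_congr rfl this, ← Finset.mul_sum, ← hG2]
    field_simp
  -- decomposition of G in the standard basis
  have hGdec : G = ∑ j, G j • e j := by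
    ext i
    rw [WithLp.ofLp_sum, Finset.sum_apply]
    have : ∀ j ∈ univ, (G j • e j) i = G j * (if i = j then 1 else 0) := by
      intro j _
      rw [hedef]
      simp [EuclideanSpace.single_apply, eq_comm]
    rw [Finset.sum_congr rfl this]
    simp [Finset.sum_ite_eq, mul_ite]
  -- Hessian applied to G, coordinatewise
  have hApp : ∀ i, hessApply u x G i = ∑ j, G j * H i j := by
    intro i
    have h1 : hessApply u x G i = fderiv ℝ (fun y => fderiv ℝ u y G) x (e i) := rfl
    rw [h1, hkey G (e i)]
    conv_lhs => rw [hGdec]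
    rw [map_sum]
    refine Finset.sum_congr rfl fun j _ => ?_
    rw [_root_.map_smul, smul_eq_mul, ← hH i j]
  -- norm of the normalized Hessian-gradient vector
  have hw : ‖‖G‖⁻¹ • hessApply u x G‖ ^ 2 = ∑ i, (∑ j, H i j * ν j) ^ 2 := by
    rw [EuclideanSpace.norm_eq, Real.sq_sqrt (by positivity)]
    refine Finset.sum_congr rfl fun i _ => ?_
    have h1 : (‖G‖⁻¹ • hessApply u x G) i = ‖G‖⁻¹ * hessApply u x G i := rfl
    have h2 : ‖G‖⁻¹ * hessApply u x G i = ∑ j, H i j * ν j := by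
      rw [hApp i, Finset.mul_sum]
      refine Finset.sum_congr rfl fun j _ => ?_
      simp only [hνdef]
      ring
    rw [Real.norm_eq_abs, sq_abs, h1, h2]
  -- Laplacian bound
  have hDeq : lapl u x = ∑ i, H i i := rfl
  have hDM : lapl u x ≤ A * |u x| + K := by
    have h1 := hlap x hx
    have h2 := hf (u x)
    have h3 : -(A * |u x|) ≤ A * min 0 (u x) := by
      rcases le_total (u x) 0 with h | h
      · rw [min_eq_right h, abs_of_nonpos h]
        exact le_of_eq (by ring)
      · rw [min_eq_left h, abs_of_nonneg h, mul_zero]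
        have := mul_nonneg hA h
        linarith
    linarith
  have hM : 0 ≤ A * |u x| + K := by positivity
  have main := key_alg n (le_trans one_le_two hn) H hsymm ν
      (fun i => ∑ j, H i j * ν j)
      (fun i => (∑ j, H i j * ν j) - (∑ k, ν k * ∑ j, H k j * ν j) * ν i)
      (∑ i, ∑ j, H i j ^ 2) (∑ i, (∑ j, H i j * ν j) ^ 2)
      (∑ i, ν i * ∑ j, H i j * ν j) (lapl u x) (A * |u x| + K)
      hν (fun i => rfl) rfl rfl rfl (fun i => rfl) hDeq hM hDM
  have hHN : hessNorm u x = Real.sqrt (∑ i, ∑ j, H i j ^ 2) := rfl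
  have hS0 : (0:ℝ) ≤ ∑ i, ∑ j, H i j ^ 2 := by positivity
  rw [hHN, Real.sq_sqrt hS0, hw]
  exact main
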